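/- For every type T and every T-signature S, the syntax STS(S), with unit Var and the recursively defined substitution subst, is a monad on [T,Set]: for all families V, W, X, all f : ∀ t, V t → STS W t, g : ∀ t, W t → STS X t, all t ∈ T, v ∈ V t and x ∈ STS V t, one has subst f (Var v) = f t v, subst Var x = x, and subst g (subst f x) = subst (fun t v => subst g (f t v)) x. -/

import Mathlib

set_option autoImplicit false

universe u

/-- `Fresh a V` is the family `V` enriched with one fresh element of index `a`,
i.e. `V^{*a}`. -/
inductive Fresh {T : Type u} (a : T) (V : T → Type u) : T → Type u where
  | old : ∀ {t : T}, V t → Fresh a V t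
  | new : Fresh a V a

/-- `pow l V` is `V` enriched with fresh variables of types according to the
list `l`, written `V ** l`. -/
def pow {T : Type u} (l : List T) (V : T → Type u) : T → Type u :=
  match l with
  | [] => V
  | b :: bs => pow bs (Fresh b V)

/-- A `T`-signature: to each output type it could assign arities; here a family
of `T`-arities indexed by some type, an arity being a pair of a list of pairs
`(s⃗, t)` and an output type `t₀`. -/
structure Signature (T : Type u) where
  idx : Type u
  ar : idx → List (List T × T) × T

mutual
/-- The syntax associated to the signature `S`: an inductive family parametrized
by a family `V` of variables and indexed by object types. `Var` makes a variable
into a term; for each arity `i` of `S` with argument list `[(s⃗₁,t₁),…,(s⃗ₙ,tₙ)]`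
and output type `t₀`, `Build i` takes arguments in `STS S (V ** s⃗ⱼ) tⱼ` and
produces a term of type `t₀`. -/
inductive STS {T : Type u} (S : Signature T) : (T → Type u) → T → Type (u + 1) where
  | Var : ∀ {V : T → Type u} {t : T}, V t → STS S V t
  | Build : ∀ {V : T → Type u} (i : S.idx),
      STSList S V (S.ar i).1 → STS S V (S.ar i).2

inductive STSList {T : Type u} (S : Signature T) :
    (T → Type u) → List (List T × T) → Type (u + 1) where
  | nil : ∀ {V : T → Type u}, STSList S V []
  | cons : ∀ {V : T → Type u} {b : List T × T} {bs : List (List T × T)},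
      STS S (pow b.1 V) b.2 → STSList S V bs → STSList S V (b :: bs)
end

/-- The shifting of a substitution map `f : V → STS S W`, relative to a
candidate substitution operation `sb`: the fresh variable is sent to itself as
a term (via `Var`), and an old variable `v` is sent to the renaming of `f v`
along the inclusion `W → W^{*a}` (renaming being substitution with a family of
variables-as-terms). -/
def genShift {T : Type u} (S : Signature T)
    (sb : ∀ (V W : T → Type u), (∀ t, V t → STS S W t) → ∀ t, STS S V t → STS S W t)
    (a : T) {V W : T → Type u} (f : ∀ t, V t → STS S W t) :
    ∀ t, Fresh a V t → STS S (Fresh a W) t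
  | _, .old v => sb W (Fresh a W) (fun _ w => STS.Var (Fresh.old w)) _ (f _ v)
  | _, .new => STS.Var Fresh.new

/-- Multiple shifting `f^{s⃗}`, relative to a candidate substitution operation. -/
def genLshift {T : Type u} (S : Signature T)
    (sb : ∀ (V W : T → Type u), (∀ t, V t → STS S W t) → ∀ t, STS S V t → STS S W t) :
    ∀ (l : List T) {V W : T → Type u},
      (∀ t, V t → STS S W t) → ∀ t, pow l V t → STS S (pow l W) t
  | [], _, _, f => f
  | b :: bs, _, _, f => genLshift S sb bs (genShift S sb b f)

/-- Map a family of functions over the components of an argument list of terms. -/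
def stsMap {T : Type u} {S : Signature T} {V W : T → Type u}
    (h : ∀ b : List T × T, STS S (pow b.1 V) b.2 → STS S (pow b.1 W) b.2) :
    ∀ {l : List (List T × T)}, STSList S V l → STSList S W l
  | _, .nil => .nil
  | _, .cons (b := b) x xs => .cons (h b x) (stsMap h xs)

section Aux
variable {T : Type u} {S : Signature T}

def freshRen {a : T} {V W : T → Type u} (g : ∀ t, V t → W t) :
    ∀ t, Fresh a V t → Fresh a W t
  | _, .old v => .old (g _ v)
  | _, .new => .new

def powRen : ∀ (l : List T) {V W : T → Type u},
    (∀ t, V t → W t) → ∀ t, pow l V t → pow l W t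
  | [], _, _, g => g
  | _ :: bs, _, _, g => powRen bs (freshRen g)

mutual
def ren {V W : T → Type u} (g : ∀ t, V t → W t) : ∀ t, STS S V t → STS S W t
  | _, .Var v => .Var (g _ v)
  | _, .Build i xs => .Build i (renList g xs)

def renList {V W : T → Type u} (g : ∀ t, V t → W t) :
    ∀ {l}, STSList S V l → STSList S W l
  | _, .nil => .nil
  | _, .cons (b := b) x xs => .cons (ren (powRen b.1 g) _ x) (renList g xs)
end

def shiftS (a : T) {V W : T → Type u} (f : ∀ t, V t → STS S W t) :
    ∀ t, Fresh a V t → STS S (Fresh a W) t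
  | _, .old v => ren (fun _ w => .old w) _ (f _ v)
  | _, .new => .Var .new

def lshiftS : ∀ (l : List T) {V W : T → Type u},
    (∀ t, V t → STS S W t) → ∀ t, pow l V t → STS S (pow l W) t
  | [], _, _, f => f
  | b :: bs, _, _, f => lshiftS bs (shiftS b f)

mutual
def subst {V W : T → Type u} (f : ∀ t, V t → STS S W t) :
    ∀ t, STS S V t → STS S W t
  | _, .Var v => f _ v
  | _, .Build i xs => .Build i (substList f xs)

def substList {V W : T → Type u} (f : ∀ t, V t → STS S W t) :
    ∀ {l}, STSList S V l → STSList S W l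
  | _, .nil => .nil
  | _, .cons (b := b) x xs => .cons (subst (lshiftS b.1 f) _ x) (substList f xs)
end

end Aux

section Aux2
variable {T : Type u} {S : Signature T}

theorem freshRen_comp {a : T} {V W X : T → Type u} (g : ∀ t, V t → W t)
    (g' : ∀ t, W t → X t) :
    ∀ t (x : Fresh a V t),
      freshRen g' t (freshRen g t x) = freshRen (fun t v => g' t (g t v)) t x
  | _, .old _ => rfl
  | _, .new => rfl

theorem powRen_comp : ∀ (l : List T) {V W X : T → Type u} (g : ∀ t, V t → W t)
    (g' : ∀ t, W t → X t) (t : T) (x : pow l V t),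
    powRen l g' t (powRen l g t x) = powRen l (fun t v => g' t (g t v)) t x
  | [], _, _, _, _, _, _, _ => rfl
  | b :: bs, _, _, _, g, g', t, x => by
    show powRen bs (freshRen g') t (powRen bs (freshRen g) t x) = _
    rw [powRen_comp bs (freshRen (a := b) g) (freshRen g') t x]
    have h : (fun t v => freshRen (a := b) g' t (freshRen g t v))
        = freshRen (fun t v => g' t (g t v)) :=
      funext fun t => funext fun v => freshRen_comp g g' t v
    rw [h]; rfl

theorem freshRen_id {a : T} {V : T → Type u} :
    ∀ t (x : Fresh a V t), freshRen (fun _ v => v) t x = x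
  | _, .old _ => rfl
  | _, .new => rfl

theorem powRen_id : ∀ (l : List T) {V : T → Type u} (t : T) (x : pow l V t),
    powRen l (fun _ v => v) t x = x
  | [], _, _, _ => rfl
  | b :: bs, V, t, x => by
    show powRen bs (freshRen fun _ v => v) t x = x
    have h : (freshRen (a := b) (V := V) fun _ v => v) = fun _ v => v :=
      funext fun t => funext fun v => freshRen_id t v
    rw [h, powRen_id bs t x]

mutual
theorem ren_comp {V W X : T → Type u} (g : ∀ t, V t → W t) (g' : ∀ t, W t → X t) :
    ∀ t (x : STS S V t), ren g' t (ren g t x) = ren (fun t v => g' t (g t v)) t x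
  | _, .Var _ => rfl
  | _, .Build i xs => by
    simp only [ren]
    rw [renList_comp g g' xs]

theorem renList_comp {V W X : T → Type u} (g : ∀ t, V t → W t) (g' : ∀ t, W t → X t) :
    ∀ {l} (xs : STSList S V l),
      renList g' (renList g xs) = renList (fun t v => g' t (g t v)) xs
  | _, .nil => rfl
  | _, .cons (b := b) x xs => by
    simp only [renList]
    rw [ren_comp (powRen b.1 g) (powRen b.1 g') _ x, renList_comp g g' xs]
    have h : (fun t v => powRen b.1 g' t (powRen b.1 g t v))
        = powRen b.1 (fun t v => g' t (g t v)) :=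
      funext fun t => funext fun v => powRen_comp b.1 g g' t v
    rw [h]
end

mutual
theorem ren_id {V : T → Type u} : ∀ t (x : STS S V t), ren (fun _ v => v) t x = x
  | _, .Var _ => rfl
  | _, .Build i xs => by simp only [ren]; rw [renList_id xs]

theorem renList_id {V : T → Type u} : ∀ {l} (xs : STSList S V l),
    renList (fun _ v => v) xs = xs
  | _, .nil => rfl
  | _, .cons (b := b) x xs => by
    simp only [renList]
    have h : (powRen (V := V) b.1 fun _ v => v) = fun _ v => v :=
      funext fun t => funext fun v => powRen_id b.1 t v
    rw [h, ren_id _ x, renList_id xs]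
end

end Aux2

section Aux3
variable {T : Type u} {S : Signature T}

-- shift of a variable-renaming substitution is a renaming
theorem shiftS_var {a : T} {V W : T → Type u} (g : ∀ t, V t → W t) :
    ∀ t (x : Fresh a V t),
      shiftS a (fun t v => STS.Var (S := S) (g t v)) t x
        = STS.Var (freshRen g t x)
  | _, .old _ => rfl
  | _, .new => rfl

theorem lshiftS_var : ∀ (l : List T) {V W : T → Type u} (g : ∀ t, V t → W t)
    (t : T) (x : pow l V t),
    lshiftS (S := S) l (fun t v => STS.Var (g t v)) t x = STS.Var (powRen l g t x)
  | [], _, _, _, _, _ => rfl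
  | b :: bs, _, _, g, t, x => by
    show lshiftS bs (shiftS b fun t v => STS.Var (g t v)) t x = _
    have h : (shiftS (S := S) b fun t v => STS.Var (g t v))
        = fun t v => STS.Var (freshRen g t v) :=
      funext fun t => funext fun v => shiftS_var g t v
    rw [h, lshiftS_var bs (freshRen (a := b) g) t x]; rfl

-- subst of variables-as-terms is renaming
mutual
theorem subst_var {V W : T → Type u} (g : ∀ t, V t → W t) :
    ∀ t (x : STS S V t), subst (fun t v => STS.Var (g t v)) t x = ren g t x
  | _, .Var _ => rfl
  | _, .Build i xs => by simp only [subst, ren]; rw [substList_var g xs]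

theorem substList_var {V W : T → Type u} (g : ∀ t, V t → W t) :
    ∀ {l} (xs : STSList S V l),
      substList (fun t v => STS.Var (g t v)) xs = renList g xs
  | _, .nil => rfl
  | _, .cons (b := b) x xs => by
    simp only [substList, renList]
    have h : lshiftS (S := S) b.1 (fun t v => STS.Var (g t v))
        = fun t v => STS.Var (powRen b.1 g t v) :=
      funext fun t => funext fun v => lshiftS_var b.1 g t v
    rw [h, subst_var _ _ x, substList_var g xs]
end

-- shift commutes with precomposition by a renaming
theorem shiftS_ren {a : T} {V W X : T → Type u} (g : ∀ t, V t → W t)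
    (f : ∀ t, W t → STS S X t) :
    ∀ t (x : Fresh a V t),
      shiftS a (fun t v => f t (g t v)) t x = shiftS a f t (freshRen g t x)
  | _, .old _ => rfl
  | _, .new => rfl

theorem lshiftS_ren : ∀ (l : List T) {V W X : T → Type u} (g : ∀ t, V t → W t)
    (f : ∀ t, W t → STS S X t) (t : T) (x : pow l V t),
    lshiftS l (fun t v => f t (g t v)) t x = lshiftS l f t (powRen l g t x)
  | [], _, _, _, _, _, _, _ => rfl
  | b :: bs, _, _, _, g, f, t, x => by
    show lshiftS bs (shiftS b fun t v => f t (g t v)) t x = _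
    have h : (shiftS (S := S) b fun t v => f t (g t v))
        = fun t v => shiftS b f t (freshRen g t v) :=
      funext fun t => funext fun v => shiftS_ren g f t v
    rw [h, lshiftS_ren bs (freshRen (a := b) g) (shiftS b f) t x]; rfl

mutual
theorem subst_ren {V W X : T → Type u} (g : ∀ t, V t → W t)
    (f : ∀ t, W t → STS S X t) :
    ∀ t (x : STS S V t), subst f t (ren g t x) = subst (fun t v => f t (g t v)) t x
  | _, .Var _ => rfl
  | _, .Build i xs => by simp only [ren, subst]; rw [substList_ren g f xs]

theorem substList_ren {V W X : T → Type u} (g : ∀ t, V t → W t)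
    (f : ∀ t, W t → STS S X t) :
    ∀ {l} (xs : STSList S V l),
      substList f (renList g xs) = substList (fun t v => f t (g t v)) xs
  | _, .nil => rfl
  | _, .cons (b := b) x xs => by
    simp only [renList, substList]
    rw [subst_ren (powRen b.1 g) (lshiftS b.1 f) _ x, substList_ren g f xs]
    have h : (fun t v => lshiftS (S := S) b.1 f t (powRen b.1 g t v))
        = lshiftS b.1 (fun t v => f t (g t v)) :=
      funext fun t => funext fun v => (lshiftS_ren b.1 g f t v).symm
    rw [h]
end

-- renaming after substitution
theorem shiftS_ren' {a : T} {V W X : T → Type u} (f : ∀ t, V t → STS S W t)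
    (g : ∀ t, W t → X t) :
    ∀ t (x : Fresh a V t),
      shiftS a (fun t v => ren g t (f t v)) t x
        = ren (freshRen g) t (shiftS a f t x)
  | _, .old v => by
    simp only [shiftS]
    rw [ren_comp, ren_comp]
    rfl
  | _, .new => rfl

theorem lshiftS_ren' : ∀ (l : List T) {V W X : T → Type u}
    (f : ∀ t, V t → STS S W t) (g : ∀ t, W t → X t) (t : T) (x : pow l V t),
    lshiftS l (fun t v => ren g t (f t v)) t x
      = ren (powRen l g) t (lshiftS l f t x)
  | [], _, _, _, _, _, _, _ => rfl
  | b :: bs, _, _, _, f, g, t, x => by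
    show lshiftS bs (shiftS b fun t v => ren g t (f t v)) t x = _
    have h : (shiftS (S := S) b fun t v => ren g t (f t v))
        = fun t v => ren (freshRen g) t (shiftS b f t v) :=
      funext fun t => funext fun v => shiftS_ren' f g t v
    rw [h, lshiftS_ren' bs (shiftS b f) (freshRen g) t x]; rfl

mutual
theorem ren_subst {V W X : T → Type u} (f : ∀ t, V t → STS S W t)
    (g : ∀ t, W t → X t) :
    ∀ t (x : STS S V t),
      ren g t (subst f t x) = subst (fun t v => ren g t (f t v)) t x
  | _, .Var _ => rfl
  | _, .Build i xs => by simp only [subst, ren]; rw [renList_subst f g xs]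

theorem renList_subst {V W X : T → Type u} (f : ∀ t, V t → STS S W t)
    (g : ∀ t, W t → X t) :
    ∀ {l} (xs : STSList S V l),
      renList g (substList f xs) = substList (fun t v => ren g t (f t v)) xs
  | _, .nil => rfl
  | _, .cons (b := b) x xs => by
    simp only [substList, renList]
    rw [ren_subst (lshiftS b.1 f) (powRen b.1 g) _ x, renList_subst f g xs]
    have h : (fun t v => ren (powRen b.1 g) t (lshiftS (S := S) b.1 f t v))
        = lshiftS b.1 (fun t v => ren g t (f t v)) :=
      funext fun t => funext fun v => (lshiftS_ren' b.1 f g t v).symm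
    rw [h]
end

end Aux3

section Aux4
variable {T : Type u} {S : Signature T}

theorem shiftS_subst {a : T} {V W X : T → Type u} (f : ∀ t, V t → STS S W t)
    (g : ∀ t, W t → STS S X t) :
    ∀ t (x : Fresh a V t),
      shiftS a (fun t v => subst g t (f t v)) t x
        = subst (shiftS a g) t (shiftS a f t x)
  | _, .old v => by
    simp only [shiftS]
    rw [ren_subst, subst_ren]
    rfl
  | _, .new => rfl

theorem lshiftS_subst : ∀ (l : List T) {V W X : T → Type u}
    (f : ∀ t, V t → STS S W t) (g : ∀ t, W t → STS S X t) (t : T) (x : pow l V t),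
    lshiftS l (fun t v => subst g t (f t v)) t x
      = subst (lshiftS l g) t (lshiftS l f t x)
  | [], _, _, _, _, _, _, _ => rfl
  | b :: bs, _, _, _, f, g, t, x => by
    show lshiftS bs (shiftS b fun t v => subst g t (f t v)) t x = _
    have h : (shiftS (S := S) b fun t v => subst g t (f t v))
        = fun t v => subst (shiftS b g) t (shiftS b f t v) :=
      funext fun t => funext fun v => shiftS_subst f g t v
    rw [h, lshiftS_subst bs (shiftS b f) (shiftS b g) t x]; rfl

mutual
theorem subst_subst {V W X : T → Type u} (f : ∀ t, V t → STS S W t)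
    (g : ∀ t, W t → STS S X t) :
    ∀ t (x : STS S V t),
      subst g t (subst f t x) = subst (fun t v => subst g t (f t v)) t x
  | _, .Var _ => rfl
  | _, .Build i xs => by simp only [subst]; rw [substList_subst f g xs]

theorem substList_subst {V W X : T → Type u} (f : ∀ t, V t → STS S W t)
    (g : ∀ t, W t → STS S X t) :
    ∀ {l} (xs : STSList S V l),
      substList g (substList f xs) = substList (fun t v => subst g t (f t v)) xs
  | _, .nil => rfl
  | _, .cons (b := b) x xs => by
    simp only [substList]
    rw [subst_subst (lshiftS b.1 f) (lshiftS b.1 g) _ x, substList_subst f g xs]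
    have h : (fun t v => subst (lshiftS (S := S) b.1 g) t (lshiftS b.1 f t v))
        = lshiftS b.1 (fun t v => subst g t (f t v)) :=
      funext fun t => funext fun v => (lshiftS_subst b.1 f g t v).symm
    rw [h]
end

mutual
theorem subst_id {V : T → Type u} : ∀ t (x : STS S V t),
    subst (fun _ v => STS.Var v) t x = x
  | t, x => by
    rw [show (fun _ v => STS.Var (S := S) (V := V) v)
          = fun t v => STS.Var ((fun _ (v : V _) => v) t v) from rfl,
        subst_var, ren_id]
end

-- relating the candidate shifts in the statement to ours
theorem genShift_eq {a : T} {V W : T → Type u} (f : ∀ t, V t → STS S W t) :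
    ∀ t (x : Fresh a V t),
      genShift S (fun _ _ => subst) a f t x = shiftS a f t x
  | _, .old v => by
    simp only [genShift, shiftS]
    rw [subst_var (fun _ w => Fresh.old w)]
  | _, .new => rfl

theorem genLshift_eq : ∀ (l : List T) {V W : T → Type u}
    (f : ∀ t, V t → STS S W t) (t : T) (x : pow l V t),
    genLshift S (fun _ _ => subst) l f t x = lshiftS l f t x
  | [], _, _, _, _, _ => rfl
  | b :: bs, _, _, f, t, x => by
    show genLshift S _ bs (genShift S _ b f) t x = _
    have h : genShift S (fun _ _ => subst) b f = shiftS b f :=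
      funext fun t => funext fun v => genShift_eq f t v
    rw [h, genLshift_eq bs (shiftS b f) t x]; rfl

theorem substList_eq_stsMap {V W : T → Type u} (f : ∀ t, V t → STS S W t) :
    ∀ {l} (xs : STSList S V l),
      substList f xs = stsMap (fun b x => subst (lshiftS b.1 f) _ x) xs
  | _, .nil => rfl
  | _, .cons x xs => by
    simp only [substList, stsMap]
    rw [substList_eq_stsMap f xs]

end Aux4

/-- For every type `T` and every `T`-signature `S`, the syntax `STS S`, with
unit `Var` and the recursively defined substitution `sb`, is a monad on
`[T,Set]`: there is a substitution operation `sb` satisfying the defining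
recursion equations (variables are substituted by `f`; under `Build i` one
substitutes with the suitably shifted maps), and it satisfies the three
Kleisli-triple (monad) laws. -/
theorem STS_is_monad (T : Type u) (S : Signature T) :
    ∃ sb : ∀ (V W : T → Type u),
        (∀ t, V t → STS S W t) → ∀ t, STS S V t → STS S W t,
      -- defining recursion equations of the substitution
      (∀ (V W : T → Type u) (f : ∀ t, V t → STS S W t) (t : T) (v : V t),
        sb V W f t (STS.Var v) = f t v) ∧
      (∀ (V W : T → Type u) (f : ∀ t, V t → STS S W t) (i : S.idx)
          (xs : STSList S V (S.ar i).1),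
        sb V W f (S.ar i).2 (STS.Build i xs)
          = STS.Build i
              (stsMap (fun b x =>
                sb (pow b.1 V) (pow b.1 W) (genLshift S sb b.1 f) b.2 x) xs)) ∧
      -- the three monad laws
      (∀ (V W : T → Type u) (f : ∀ t, V t → STS S W t) (t : T) (v : V t),
        sb V W f t (STS.Var v) = f t v) ∧
      (∀ (V : T → Type u) (t : T) (x : STS S V t),
        sb V V (fun t v => STS.Var v) t x = x) ∧
      (∀ (V W X : T → Type u) (f : ∀ t, V t → STS S W t)
          (g : ∀ t, W t → STS S X t) (t : T) (x : STS S V t),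
        sb W X g t (sb V W f t x)
          = sb V X (fun t v => sb W X g t (f t v)) t x) := by
  refine ⟨fun _ _ => subst, fun _ _ _ _ _ => rfl, ?_, fun _ _ _ _ _ => rfl,
    fun _ t x => subst_id t x, fun _ _ _ f g t x => subst_subst f g t x⟩
  intro V W f i xs
  show STS.Build i (substList f xs) = _
  rw [substList_eq_stsMap f xs]
  congr 1
  have h : ∀ (b : List T × T) (x : STS S (pow b.1 V) b.2),
      subst (lshiftS b.1 f) _ x
        = subst (genLshift S (fun _ _ => subst) b.1 f) _ x := by
    intro b x
    have hg : genLshift S (fun _ _ => subst) b.1 f = lshiftS b.1 f :=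
      funext fun t => funext fun v => genLshift_eq b.1 f t v
    rw [hg]
  exact congrArg (fun h => stsMap h xs)
    (funext fun b => funext fun x => h b x)
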